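/- Let P be a path that is ascending with respect to a charge drop schedule C and let b ∈ [0,B]. Then α_b(P) = min{B, b + g(P)} ≥ min{B, b + g^C(P)}; in particular P is strongly traversable. -/
import Mathlib


open Finset

namespace EV

noncomputable section

/-- Charge after traversing `i` arcs of a path with arc gains `g`, battery capacity `B`,
initial charge `b`. -/
def charge (B b : ℝ) (g : ℕ → ℝ) : ℕ → ℝ
  | 0 => b
  | i + 1 => min (charge B b g i + g i) B

/-- The traversal of the path with `n` arcs is feasible from initial charge `b`. -/
def Feasible (B b : ℝ) (g : ℕ → ℝ) (n : ℕ) : Prop :=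
  ∀ i < n, 0 ≤ charge B b g i + g i

open Classical in
/-- Maximum final charge `α_b(P)` for a path `P` with `n` arc gains `g`,
as an extended real (`⊥ = -∞` if the traversal is infeasible). -/
def alpha (B b : ℝ) (g : ℕ → ℝ) (n : ℕ) : EReal :=
  if Feasible B b g n then ((charge B b g n : ℝ) : EReal) else ⊥

/-- Gain of the `i`-th vertex (0-indexed): the sum of the first `i` arc gains. -/
def vGain (g : ℕ → ℝ) (i : ℕ) : ℝ := ∑ t ∈ Finset.range i, g t

/-- `P` is traversable: `α_B(P) ≥ 0`, i.e. feasible from a full battery. -/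
def Traversable (B : ℝ) (g : ℕ → ℝ) (n : ℕ) : Prop := Feasible B B g n

/-- `C` is a charge drop schedule for a path with `n` arcs (vertices `0,…,n`):
no drop at the first vertex, all drops nonnegative. -/
def Schedule (C : ℕ → ℝ) (n : ℕ) : Prop := C 0 = 0 ∧ ∀ i ≤ n, 0 ≤ C i

/-- Gain of vertex `i` with respect to the charge drop schedule `C`. -/
def cGain (g C : ℕ → ℝ) (i : ℕ) : ℝ := vGain g i - ∑ t ∈ Finset.range (i + 1), C t

/-- `P` (with `n` arcs) is ascending with respect to the schedule `C`. -/
def AscendingC (B : ℝ) (g C : ℕ → ℝ) (n : ℕ) : Prop :=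
  Traversable B g n ∧ ∀ i ≤ n, 0 ≤ cGain g C i ∧ cGain g C i ≤ cGain g C n

/-- `P` (with `n` arcs) is descending with respect to the schedule `C`. -/
def DescendingC (B : ℝ) (g C : ℕ → ℝ) (n : ℕ) : Prop :=
  Traversable B g n ∧ ∀ i ≤ n, cGain g C n ≤ cGain g C i ∧ cGain g C i ≤ 0

/-- `P` is monotone with respect to the schedule `C`. -/
def MonotoneC (B : ℝ) (g C : ℕ → ℝ) (n : ℕ) : Prop :=
  AscendingC B g C n ∨ DescendingC B g C n

/-- Ascending with respect to the zero schedule. -/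
def Ascending (B : ℝ) (g : ℕ → ℝ) (n : ℕ) : Prop := AscendingC B g (fun _ => 0) n

/-- Descending with respect to the zero schedule. -/
def Descending (B : ℝ) (g : ℕ → ℝ) (n : ℕ) : Prop := DescendingC B g (fun _ => 0) n

/-- Monotone with respect to the zero schedule. -/
def MonotonePath (B : ℝ) (g : ℕ → ℝ) (n : ℕ) : Prop := Ascending B g n ∨ Descending B g n

/-- The contiguous subpath whose arcs start at arc index `a`. -/
def SubPath (g : ℕ → ℝ) (a : ℕ) : ℕ → ℝ := fun t => g (a + t)

/-- Restriction of a charge drop schedule to the subpath starting at vertex `a`: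
no drop at the subpath's first vertex. -/
def restrict (C : ℕ → ℝ) (a : ℕ) : ℕ → ℝ := fun t => if t = 0 then 0 else C (a + t)

/-- First-arc-bounded with respect to a schedule `C` (no drop at the second vertex,
and all vertex gains lie between the gains of the first two vertices). -/
def FirstArcBoundedC (g C : ℕ → ℝ) (n : ℕ) : Prop :=
  C 1 = 0 ∧
    ((0 ≤ g 0 ∧ ∀ i ≤ n, 0 ≤ cGain g C i ∧ cGain g C i ≤ g 0) ∨
     (g 0 ≤ 0 ∧ ∀ i ≤ n, g 0 ≤ cGain g C i ∧ cGain g C i ≤ 0))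

/-- Last-arc-bounded with respect to a schedule `C` (no drops at the last two vertices,
and all vertex gains lie between the gains of the last two vertices). -/
def LastArcBoundedC (g C : ℕ → ℝ) (n : ℕ) : Prop :=
  C (n - 1) = 0 ∧ C n = 0 ∧
    ((0 ≤ g (n - 1) ∧ ∀ i ≤ n, cGain g C (n - 1) ≤ cGain g C i ∧ cGain g C i ≤ cGain g C n) ∨
     (g (n - 1) < 0 ∧ ∀ i ≤ n, cGain g C n ≤ cGain g C i ∧ cGain g C i ≤ cGain g C (n - 1)))

/-- First-arc-bounded (zero schedule). -/
def FirstArcBounded (g : ℕ → ℝ) (n : ℕ) : Prop := FirstArcBoundedC g (fun _ => 0) n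

/-- Last-arc-bounded (zero schedule). -/
def LastArcBounded (g : ℕ → ℝ) (n : ℕ) : Prop := LastArcBoundedC g (fun _ => 0) n

/-- Arc-bounded: first- or last-arc-bounded. -/
def ArcBounded (g : ℕ → ℝ) (n : ℕ) : Prop := FirstArcBounded g n ∨ LastArcBounded g n

/-- A funnel: arc-bounded and containing no monotone subpath of 2 or 3 consecutive arcs. -/
def Funnel (B : ℝ) (g : ℕ → ℝ) (n : ℕ) : Prop :=
  ArcBounded g n ∧ ∀ a m, (m = 2 ∨ m = 3) → a + m ≤ n → ¬ MonotonePath B (SubPath g a) m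

/-- `j = s̄(i)`: the maximal index `j ≥ i` (among arcs of a path with `n` arcs) such that
the subpath of arcs `i,…,j` is first-arc-bounded. -/
def IsSbar (g : ℕ → ℝ) (n i j : ℕ) : Prop :=
  i ≤ j ∧ j < n ∧ FirstArcBounded (SubPath g i) (j - i + 1) ∧
    ∀ j', i ≤ j' → j' < n → FirstArcBounded (SubPath g i) (j' - i + 1) → j' ≤ j

/-- `j = s̲(i)`: the minimal index `j ≤ i` such that the subpath of arcs `j,…,i`
is last-arc-bounded. -/
def IsSlow (g : ℕ → ℝ) (n i j : ℕ) : Prop :=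
  j ≤ i ∧ i < n ∧ LastArcBounded (SubPath g j) (i - j + 1) ∧
    ∀ j', j' ≤ i → LastArcBounded (SubPath g j') (i - j' + 1) → j ≤ j'

/-- Arc gains of the walk around a cycle with `m` arc gains `g`, starting at vertex `a`. -/
def cyc (g : ℕ → ℝ) (m a : ℕ) : ℕ → ℝ := fun t => g ((a + t) % m)

/-- A walk of length `ℓ` from `x` to `y` in the directed graph with arc relation `A`. -/
def IsWalk {V : Type*} (A : V → V → Prop) (w : ℕ → V) (ℓ : ℕ) (x y : V) : Prop :=
  w 0 = x ∧ w ℓ = y ∧ ∀ t < ℓ, A (w t) (w (t + 1))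

/-- The sequence of arc gains induced by a walk `w` in a graph with gain function `g`. -/
def walkGains {V : Type*} (g : V → V → ℝ) (w : ℕ → V) : ℕ → ℝ :=
  fun t => g (w t) (w (t + 1))

lemma vGain_succ (g : ℕ → ℝ) (i : ℕ) : vGain g (i + 1) = vGain g i + g i :=
  Finset.sum_range_succ g i

lemma charge_le_B {B b : ℝ} (hbB : b ≤ B) (g : ℕ → ℝ) (i : ℕ) : charge B b g i ≤ B := by
  cases i with
  | zero => exact hbB
  | succ i => exact min_le_right _ _

lemma charge_le_add {B b : ℝ} (g : ℕ → ℝ) {j i : ℕ} (h : j ≤ i) :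
    charge B b g i ≤ charge B b g j + (vGain g i - vGain g j) := by
  induction i, h using Nat.le_induction with
  | base => simp
  | succ i hji ih =>
      calc charge B b g (i + 1) ≤ charge B b g i + g i := min_le_left _ _
        _ ≤ charge B b g j + (vGain g i - vGain g j) + g i := by linarith
        _ = charge B b g j + (vGain g (i + 1) - vGain g j) := by
            rw [vGain_succ]; ring

lemma charge_rep (B b : ℝ) (g : ℕ → ℝ) (i : ℕ) :
    ∃ j ≤ i, charge B b g i = (if j = 0 then b else B - vGain g j) + vGain g i := by
  induction i with
  | zero => exact ⟨0, le_refl 0, by simp [charge, vGain]⟩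
  | succ i ih =>
      obtain ⟨j, hji, hj⟩ := ih
      rcases le_or_gt (charge B b g i + g i) B with hle | hlt
      · refine ⟨j, hji.trans (Nat.le_succ i), ?_⟩
        show min (charge B b g i + g i) B = _
        rw [min_eq_left hle, hj, vGain_succ]; ring
      · refine ⟨i + 1, le_refl _, ?_⟩
        show min (charge B b g i + g i) B = _
        rw [min_eq_right hlt.le, if_neg (Nat.succ_ne_zero i)]; ring

/-- If `P` is ascending with respect to a schedule `C` and `b ∈ [0,B]`, then
`α_b(P) = min{B, b + g(P)} ≥ min{B, b + g^C(P)}`; in particular `P` is strongly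
traversable. -/
theorem alpha_of_ascending (B : ℝ) (hB : 0 < B) (g C : ℕ → ℝ) (n : ℕ)
    (hC : Schedule C n) (hP : AscendingC B g C n)
    (b : ℝ) (hb0 : 0 ≤ b) (hbB : b ≤ B) :
    alpha B b g n = ((min B (b + vGain g n) : ℝ) : EReal) ∧
    ((min B (b + cGain g C n) : ℝ) : EReal) ≤ alpha B b g n ∧
    (0 : EReal) ≤ alpha B 0 g n := by
  -- Facts from the schedule and ascending property
  have hCnn : ∀ t ≤ n, 0 ≤ C t := hC.2
  have hsum_nonneg : ∀ i ≤ n, 0 ≤ ∑ t ∈ Finset.range (i + 1), C t := by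
    intro i hi
    exact Finset.sum_nonneg fun t ht =>
      hCnn t (le_trans (Nat.le_of_lt_succ (Finset.mem_range.mp ht)) hi)
  have hvGain_nonneg : ∀ i ≤ n, 0 ≤ vGain g i := by
    intro i hi
    have h1 := (hP.2 i hi).1
    have h2 := hsum_nonneg i hi
    have : vGain g i = cGain g C i + ∑ t ∈ Finset.range (i + 1), C t := by
      simp [cGain]
    linarith
  have hvGain_le : ∀ j ≤ n, vGain g j ≤ vGain g n := by
    intro j hj
    have h1 := (hP.2 j hj).2
    have h2 : ∑ t ∈ Finset.range (j + 1), C t ≤ ∑ t ∈ Finset.range (n + 1), C t := by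
      apply Finset.sum_le_sum_of_subset_of_nonneg
      · exact Finset.range_subset_range.mpr (by omega)
      · intro t ht _
        exact hCnn t (Nat.le_of_lt_succ (Finset.mem_range.mp ht))
    have e1 : vGain g j = cGain g C j + ∑ t ∈ Finset.range (j + 1), C t := by simp [cGain]
    have e2 : vGain g n = cGain g C n + ∑ t ∈ Finset.range (n + 1), C t := by simp [cGain]
    linarith
  -- Feasibility from initial charge b
  have hfeas : ∀ b' : ℝ, 0 ≤ b' → b' ≤ B → Feasible B b' g n := by
    intro b' hb0' hbB' i hin
    obtain ⟨j, hji, hj⟩ := charge_rep B b' g i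
    by_cases hj0 : j = 0
    · rw [hj, if_pos hj0]
      have := hvGain_nonneg (i + 1) (by omega)
      rw [vGain_succ] at this
      linarith
    · rw [hj, if_neg hj0]
      have hBB : charge B B g i ≤ B + vGain g i - vGain g j := by
        have h1 := charge_le_add (B := B) (b := B) g hji
        have h2 := charge_le_B (le_refl B) g j
        linarith
      have := hP.1 i hin
      linarith
  have hFeas : Feasible B b g n := hfeas b hb0 hbB
  have hFeas0 : Feasible B 0 g n := hfeas 0 le_rfl hB.le
  -- Closed form for the final charge
  have hcharge : ∀ b' : ℝ, 0 ≤ b' → b' ≤ B → charge B b' g n = min B (b' + vGain g n) := by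
    intro b' hb0' hbB'
    apply le_antisymm
    · apply le_min (charge_le_B hbB' g n)
      have h := charge_le_add (B := B) (b := b') g (Nat.zero_le n)
      have h0 : charge B b' g 0 = b' := rfl
      have hv0 : vGain g 0 = 0 := by simp [vGain]
      rw [h0, hv0] at h
      linarith
    · obtain ⟨j, hji, hj⟩ := charge_rep B b' g n
      by_cases hj0 : j = 0
      · rw [hj, if_pos hj0]
        exact min_le_right _ _
      · rw [hj, if_neg hj0]
        have := hvGain_le j hji
        calc min B (b' + vGain g n) ≤ B := min_le_left _ _
          _ ≤ B - vGain g j + vGain g n := by linarith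
  refine ⟨?_, ?_, ?_⟩
  · rw [alpha, if_pos hFeas, hcharge b hb0 hbB]
  · rw [alpha, if_pos hFeas, hcharge b hb0 hbB, EReal.coe_le_coe_iff]
    have : cGain g C n ≤ vGain g n := by
      have := hsum_nonneg n le_rfl
      simp [cGain]; linarith
    exact min_le_min le_rfl (by linarith)
  · rw [alpha, if_pos hFeas0, hcharge 0 le_rfl hB.le]
    have h1 := hvGain_nonneg n le_rfl
    have : (0 : ℝ) ≤ min B (0 + vGain g n) := le_min hB.le (by linarith)
    exact_mod_cast this

end

end EV
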